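/- Let n ≥ 2, let Ω ⊂ ℝⁿ be an open bounded set, σ ∈ (0,1), α, β ≥ 0, and ρ > 0. Let S = {x ∈ Ω : ρ/4 < d(x) ≤ ρ}, let Q ⊆ S be a finite set with S ⊆ ⋃_{z∈Q} B_ρ(z) and ∑_{z∈Q} 1_{B_{8ρ}(z)}(ξ) ≤ K for all ξ ∈ ℝⁿ, and set U = ⋃_{z∈Q} (B_{8ρ}(z) ∩ Ω). Let F ∈ L¹(Ω; ℝⁿ) and let ν be a finite nonnegative Borel measure on Ω, and assume the local fractional Caccioppoli hypothesis with constant C₁ for F. Then there is C = C(n, σ, K, C₁) > 0 such that ∫_S ∫_S d^α(x) d^β(y) |F(x) − F(y)| / |x − y|^{n+σ} dx dy ≤ C ρ^{α+β−σ} ( ∫_U |F(x)| dx + ρ ν(U) ). -/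

import Mathlib

open MeasureTheory Metric Set
open scoped ENNReal
set_option maxHeartbeats 1000000

noncomputable def tailC (n : ℕ) (σ : ℝ) : ℝ≥0∞ :=
  ENNReal.ofReal (2 ^ n) * (1 - ENNReal.ofReal (2 ^ (-σ)))⁻¹ *
    volume (Metric.closedBall (0 : EuclideanSpace ℝ (Fin n)) 1)

theorem tailC_lt_top (n : ℕ) {σ : ℝ} (hσ : 0 < σ) : tailC n σ < ∞ := by
  have h1 : ENNReal.ofReal (2 ^ (-σ)) < 1 := by
    rw [← ENNReal.ofReal_one]
    exact ENNReal.ofReal_lt_ofReal_iff_of_nonneg (by positivity) |>.mpr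
      (Real.rpow_lt_one_of_one_lt_of_neg one_lt_two (neg_neg_iff_pos.mpr hσ))
  have h2 : (1 - ENNReal.ofReal (2 ^ (-σ)))⁻¹ < ∞ := by
    rw [ENNReal.inv_lt_top]
    exact tsub_pos_of_lt h1
  exact ENNReal.mul_lt_top (ENNReal.mul_lt_top ENNReal.ofReal_lt_top h2)
    (measure_closedBall_lt_top)

theorem tail_bound (n : ℕ) {σ ρ : ℝ} (hσ : 0 < σ) (hρ : 0 < ρ)
    (x : EuclideanSpace ℝ (Fin n)) :
    ∫⁻ y in (Metric.ball x ρ)ᶜ, (ENNReal.ofReal (‖x - y‖ ^ ((n : ℝ) + σ)))⁻¹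
      ≤ ENNReal.ofReal (ρ ^ (-σ)) * tailC n σ := by
  set W : EuclideanSpace ℝ (Fin n) → ℝ≥0∞ :=
    fun y => (ENNReal.ofReal (‖x - y‖ ^ ((n : ℝ) + σ)))⁻¹ with hW
  set A : ℕ → Set (EuclideanSpace ℝ (Fin n)) :=
    fun j => Metric.closedBall x (2 ^ (j + 1) * ρ) \ Metric.ball x (2 ^ j * ρ) with hA
  have hcover : (Metric.ball x ρ)ᶜ ⊆ ⋃ j, A j := by
    intro y hy
    have hyρ : ρ ≤ dist y x := by simpa [Metric.mem_ball] using hy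
    set t := dist y x / ρ with htdef
    have ht1 : (1 : ℝ) ≤ t := (one_le_div hρ).mpr hyρ
    have hfl1 : 1 ≤ ⌊t⌋₊ := Nat.one_le_iff_ne_zero.mpr (Nat.floor_pos.mpr ht1).ne'
    set j := Nat.log 2 ⌊t⌋₊ with hj
    have h1 : 2 ^ j ≤ ⌊t⌋₊ := Nat.pow_log_le_self 2 (by omega)
    have h2 : ⌊t⌋₊ < 2 ^ (j + 1) := Nat.lt_pow_succ_log_self one_lt_two _
    have hrt : dist y x = t * ρ := by rw [htdef, div_mul_cancel₀ _ hρ.ne']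
    refine Set.mem_iUnion.mpr ⟨j, ?_, ?_⟩
    · have hlt : t < 2 ^ (j + 1) := by
        have : ((⌊t⌋₊ : ℝ) + 1) ≤ ((2 ^ (j + 1) : ℕ) : ℝ) := by exact_mod_cast h2
        have := Nat.lt_floor_add_one t
        push_cast at *
        linarith
      rw [Metric.mem_closedBall, hrt]
      nlinarith
    · simp only [Metric.mem_ball, not_lt]
      have hle : (2 : ℝ) ^ j ≤ t := by
        have : ((2 ^ j : ℕ) : ℝ) ≤ (⌊t⌋₊ : ℝ) := by exact_mod_cast h1
        have := Nat.floor_le (by linarith : (0:ℝ) ≤ t)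
        push_cast at *
        linarith
      rw [hrt]
      nlinarith
  have hAm : ∀ j, MeasurableSet (A j) := fun j =>
    measurableSet_closedBall.diff measurableSet_ball
  have hr2 : ∀ j : ℕ, (0:ℝ) < 2 ^ j * ρ := fun j => by positivity
  set V₁ := volume (Metric.closedBall (0 : EuclideanSpace ℝ (Fin n)) 1) with hV₁
  have key : ∀ j : ℕ, ((2:ℝ) ^ (j+1) * ρ) ^ (n:ℕ) / (((2:ℝ) ^ j * ρ) ^ ((n:ℝ) + σ))
      = 2 ^ (n:ℕ) * ((2:ℝ) ^ (-σ)) ^ j * ρ ^ (-σ) := by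
    intro j
    have h2 : (0:ℝ) ≤ 2 := by norm_num
    have e1 : ((2:ℝ) ^ (j+1) * ρ) ^ (n:ℕ) = (2:ℝ) ^ (((j:ℝ)+1) * n) * ρ ^ (n:ℝ) := by
      rw [← Real.rpow_natCast ((2:ℝ) ^ (j+1) * ρ) n,
        Real.mul_rpow (by positivity) hρ.le, ← Real.rpow_natCast (2:ℝ) (j+1),
        ← Real.rpow_mul h2]
      push_cast
      ring_nf
    have e2 : ((2:ℝ) ^ j * ρ) ^ ((n:ℝ) + σ) = (2:ℝ) ^ ((j:ℝ) * ((n:ℝ) + σ)) * ρ ^ ((n:ℝ) + σ) := by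
      rw [Real.mul_rpow (by positivity) hρ.le, ← Real.rpow_natCast (2:ℝ) j,
        ← Real.rpow_mul h2]
    rw [e1, e2, div_eq_mul_inv, mul_inv, ← Real.rpow_neg (by norm_num : (0:ℝ) ≤ 2),
      ← Real.rpow_neg hρ.le]
    rw [show (2:ℝ) ^ (((j:ℝ)+1) * n) * ρ ^ (n:ℝ) * ((2:ℝ) ^ (-((j:ℝ) * ((n:ℝ) + σ))) * ρ ^ (-((n:ℝ) + σ)))
        = ((2:ℝ) ^ (((j:ℝ)+1) * n) * (2:ℝ) ^ (-((j:ℝ) * ((n:ℝ) + σ)))) * (ρ ^ (n:ℝ) * ρ ^ (-((n:ℝ) + σ))) by ring]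
    rw [← Real.rpow_add (by norm_num : (0:ℝ) < 2), ← Real.rpow_add hρ]
    rw [show ((j:ℝ)+1) * n + -((j:ℝ) * ((n:ℝ) + σ)) = (n:ℝ) + (-σ) * (j:ℝ) by ring,
      show (n:ℝ) + -((n:ℝ) + σ) = -σ by ring]
    rw [Real.rpow_add (by norm_num : (0:ℝ) < 2), Real.rpow_mul (by norm_num : (0:ℝ) ≤ 2),
      Real.rpow_natCast ((2:ℝ) ^ (-σ)) j, Real.rpow_natCast (2:ℝ) n]
  have hterm : ∀ j : ℕ, ∫⁻ y in A j, W y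
      ≤ ENNReal.ofReal (ρ ^ (-σ)) * (ENNReal.ofReal (2 ^ (n:ℕ)) * (ENNReal.ofReal ((2:ℝ) ^ (-σ))) ^ j * V₁) := by
    intro j
    have hb : ∫⁻ y in A j, W y
        ≤ (ENNReal.ofReal (((2:ℝ) ^ j * ρ) ^ ((n:ℝ) + σ)))⁻¹ * volume (A j) := by
      rw [← setLIntegral_const (A j)]
      refine setLIntegral_mono' (hAm j) (fun y hy => ?_)
      have hdist : 2 ^ j * ρ ≤ ‖x - y‖ := by
        have := hy.2
        simp only [Metric.mem_ball, not_lt] at this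
        rw [← dist_eq_norm, dist_comm]
        exact this
      have hcle : ((2:ℝ) ^ j * ρ) ^ ((n:ℝ) + σ) ≤ ‖x - y‖ ^ ((n:ℝ) + σ) :=
        Real.rpow_le_rpow (hr2 j).le hdist (by positivity)
      exact ENNReal.inv_le_inv.mpr (ENNReal.ofReal_le_ofReal hcle)
    have hvol : volume (A j) ≤ ENNReal.ofReal (((2:ℝ) ^ (j+1) * ρ) ^ (n:ℕ)) * V₁ := by
      calc volume (A j) ≤ volume (Metric.closedBall x (2 ^ (j+1) * ρ)) :=
            measure_mono Set.diff_subset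
      _ = ENNReal.ofReal (((2:ℝ) ^ (j+1) * ρ) ^ Module.finrank ℝ (EuclideanSpace ℝ (Fin n))) * V₁ := by
            rw [hV₁, MeasureTheory.Measure.addHaar_closedBall' volume x (hr2 (j+1)).le]
      _ = ENNReal.ofReal (((2:ℝ) ^ (j+1) * ρ) ^ (n:ℕ)) * V₁ := by
            rw [finrank_euclideanSpace_fin]
    calc ∫⁻ y in A j, W y
        ≤ (ENNReal.ofReal (((2:ℝ) ^ j * ρ) ^ ((n:ℝ) + σ)))⁻¹
            * (ENNReal.ofReal (((2:ℝ) ^ (j+1) * ρ) ^ (n:ℕ)) * V₁) :=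
          hb.trans (mul_le_mul_right hvol _)
    _ = ENNReal.ofReal (((2:ℝ) ^ (j+1) * ρ) ^ (n:ℕ) / (((2:ℝ) ^ j * ρ) ^ ((n:ℝ) + σ))) * V₁ := by
          rw [ENNReal.ofReal_div_of_pos (Real.rpow_pos_of_pos (hr2 j) _), div_eq_mul_inv]
          ring
    _ = ENNReal.ofReal (ρ ^ (-σ)) * (ENNReal.ofReal (2 ^ (n:ℕ)) * (ENNReal.ofReal ((2:ℝ) ^ (-σ))) ^ j * V₁) := by
          rw [key j, ENNReal.ofReal_mul (by positivity), ENNReal.ofReal_mul (by positivity),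
            ENNReal.ofReal_pow (by positivity : (0:ℝ) ≤ 2 ^ (-σ)) j]
          ring
  calc ∫⁻ y in (Metric.ball x ρ)ᶜ, W y ≤ ∫⁻ y in ⋃ j, A j, W y := lintegral_mono_set hcover
  _ ≤ ∑' j, ∫⁻ y in A j, W y := lintegral_iUnion_le _ _
  _ ≤ ∑' j : ℕ, ENNReal.ofReal (ρ ^ (-σ)) * (ENNReal.ofReal (2 ^ (n:ℕ)) * (ENNReal.ofReal ((2:ℝ) ^ (-σ))) ^ j * V₁) :=
        ENNReal.tsum_le_tsum hterm
  _ = ENNReal.ofReal (ρ ^ (-σ)) * (ENNReal.ofReal (2 ^ (n:ℕ)) * (∑' j : ℕ, (ENNReal.ofReal ((2:ℝ) ^ (-σ))) ^ j) * V₁) := by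
        rw [ENNReal.tsum_mul_left]
        congr 1
        rw [ENNReal.tsum_mul_right, ENNReal.tsum_mul_left]
        try ring
  _ = ENNReal.ofReal (ρ ^ (-σ)) * tailC n σ := by
        rw [ENNReal.tsum_geometric, tailC]


theorem overlap_sum (n : ℕ) (μ : Measure (EuclideanSpace ℝ (Fin n)))
    (Ω : Set (EuclideanSpace ℝ (Fin n))) (hΩ : MeasurableSet Ω)
    (Q : Finset (EuclideanSpace ℝ (Fin n))) (ρ : ℝ) (K : ℕ)
    (hover : ∀ ξ, ∑ z ∈ Q, Set.indicator (Metric.ball z (8*ρ)) (fun _ => (1:ℝ≥0∞)) ξ ≤ (K:ℝ≥0∞))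
    (f : EuclideanSpace ℝ (Fin n) → ℝ≥0∞) (hf : Measurable f) :
    ∑ z ∈ Q, ∫⁻ x in Metric.ball z (8*ρ) ∩ Ω, f x ∂μ
      ≤ (K:ℝ≥0∞) * ∫⁻ x in ⋃ z ∈ Q, (Metric.ball z (8*ρ) ∩ Ω), f x ∂μ := by
  set U := ⋃ z ∈ Q, (Metric.ball z (8*ρ) ∩ Ω) with hUdef
  have hBm : ∀ z : EuclideanSpace ℝ (Fin n), MeasurableSet (Metric.ball z (8*ρ) ∩ Ω) :=
    fun z => measurableSet_ball.inter hΩ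
  have hUm : MeasurableSet U := MeasurableSet.biUnion Q.countable_toSet (fun z _ => hBm z)
  have h1 : ∀ z ∈ Q, ∫⁻ x in Metric.ball z (8*ρ) ∩ Ω, f x ∂μ
      = ∫⁻ x, (Metric.ball z (8*ρ) ∩ Ω).indicator f x ∂μ :=
    fun z _ => (lintegral_indicator (hBm z) f).symm
  rw [Finset.sum_congr rfl h1, ← lintegral_finset_sum _ (fun z _ => hf.indicator (hBm z))]
  have hpt : ∀ x, ∑ z ∈ Q, (Metric.ball z (8*ρ) ∩ Ω).indicator f x
      ≤ (K:ℝ≥0∞) * U.indicator f x := by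
    intro x
    by_cases hx : x ∈ U
    · rw [Set.indicator_of_mem hx]
      calc ∑ z ∈ Q, (Metric.ball z (8*ρ) ∩ Ω).indicator f x
          ≤ ∑ z ∈ Q, Set.indicator (Metric.ball z (8*ρ)) (fun _ => (1:ℝ≥0∞)) x * f x := by
            refine Finset.sum_le_sum (fun z _ => ?_)
            by_cases hz : x ∈ Metric.ball z (8*ρ) ∩ Ω
            · rw [Set.indicator_of_mem hz, Set.indicator_of_mem hz.1, one_mul]
            · rw [Set.indicator_of_notMem hz]
              exact zero_le
      _ = (∑ z ∈ Q, Set.indicator (Metric.ball z (8*ρ)) (fun _ => (1:ℝ≥0∞)) x) * f x := by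
            rw [Finset.sum_mul]
      _ ≤ (K:ℝ≥0∞) * f x := mul_le_mul_left (hover x) _
    · have hz : ∀ z ∈ Q, (Metric.ball z (8*ρ) ∩ Ω).indicator f x = 0 := by
        intro z hzQ
        refine Set.indicator_of_notMem (fun hmem => hx ?_) f
        exact Set.mem_biUnion hzQ hmem
      rw [Finset.sum_congr rfl hz, Set.indicator_of_notMem hx]
      simp
  calc ∫⁻ x, ∑ z ∈ Q, (Metric.ball z (8*ρ) ∩ Ω).indicator f x ∂μ
      ≤ ∫⁻ x, (K:ℝ≥0∞) * U.indicator f x ∂μ := lintegral_mono hpt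
  _ = (K:ℝ≥0∞) * ∫⁻ x in U, f x ∂μ := by
      rw [lintegral_const_mul' _ _ (by simp), lintegral_indicator hUm]

theorem statement13_aux (n : ℕ)
    (Ω : Set (EuclideanSpace ℝ (Fin n))) (hΩo : IsOpen Ω)
    (σ : ℝ) (hσ : σ ∈ Set.Ioo (0:ℝ) 1) (α β : ℝ) (hα : 0 ≤ α) (hβ : 0 ≤ β)
    (ρ : ℝ) (hρ : 0 < ρ)
    (d : EuclideanSpace ℝ (Fin n) → ℝ)
    (hd : ∀ x, d x = Metric.infDist x (frontier Ω))
    (S : Set (EuclideanSpace ℝ (Fin n)))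
    (hS : S = {x ∈ Ω | ρ / 4 < d x ∧ d x ≤ ρ})
    (Q : Finset (EuclideanSpace ℝ (Fin n)))
    (hScov : S ⊆ ⋃ z ∈ Q, Metric.ball z ρ)
    (K : ℕ)
    (hover : ∀ ξ : EuclideanSpace ℝ (Fin n),
      ∑ z ∈ Q, Set.indicator (Metric.ball z (8 * ρ)) (fun _ => (1 : ℝ)) ξ ≤ K)
    (U : Set (EuclideanSpace ℝ (Fin n)))
    (hU : U = ⋃ z ∈ Q, (Metric.ball z (8 * ρ) ∩ Ω))
    (F : EuclideanSpace ℝ (Fin n) → EuclideanSpace ℝ (Fin n))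
    (hFm : Measurable F) (hF : IntegrableOn F Ω)
    (ν : Measure (EuclideanSpace ℝ (Fin n))) [IsFiniteMeasure ν]
    (C₁ : ℝ)
    (hcacc : ∀ (z : EuclideanSpace ℝ (Fin n)) (R : ℝ), 0 < R →
      ∫⁻ x in Metric.ball z (R / 2) ∩ Ω, ∫⁻ y in Metric.ball z (R / 2) ∩ Ω,
          ENNReal.ofReal (‖F x - F y‖ / ‖x - y‖ ^ ((n : ℝ) + σ))
        ≤ ENNReal.ofReal (C₁ * R ^ (-σ) *
            ((∫ x in Metric.ball z R ∩ Ω, ‖F x‖) + R * (ν (Metric.ball z R ∩ Ω)).toReal))) :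
    ∃ C : ℝ, 0 < C ∧
      ∫⁻ x in S, ∫⁻ y in S,
          ENNReal.ofReal (d x ^ α * d y ^ β * (‖F x - F y‖ / ‖x - y‖ ^ ((n : ℝ) + σ)))
        ≤ ENNReal.ofReal (C * ρ ^ (α + β - σ) *
            ((∫ x in U, ‖F x‖) + ρ * (ν U).toReal)) := by
  classical
  obtain ⟨hσ0, hσ1⟩ := hσ
  set g : EuclideanSpace ℝ (Fin n) → EuclideanSpace ℝ (Fin n) → ℝ≥0∞ :=
    fun x y => ENNReal.ofReal (‖F x - F y‖ / ‖x - y‖ ^ ((n : ℝ) + σ)) with hgdef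
  set w : EuclideanSpace ℝ (Fin n) → EuclideanSpace ℝ (Fin n) → ℝ≥0∞ :=
    fun x y => (ENNReal.ofReal (‖x - y‖ ^ ((n : ℝ) + σ)))⁻¹ with hwdef
  -- basic measurability
  have hΩm : MeasurableSet Ω := hΩo.measurableSet
  have hdc : Continuous d := by
    have : d = fun x => Metric.infDist x (frontier Ω) := funext hd
    rw [this]; exact Metric.continuous_infDist_pt _
  have hSm : MeasurableSet S := by
    have : S = Ω ∩ d ⁻¹' Set.Ioc (ρ/4) ρ := by
      rw [hS]; ext x; simp only [Set.mem_setOf_eq, Set.mem_inter_iff, Set.mem_preimage, Set.mem_Ioc]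
    rw [this]
    exact hΩm.inter (hdc.measurable measurableSet_Ioc)
  have hUm : MeasurableSet U := by
    rw [hU]
    exact MeasurableSet.biUnion Q.countable_toSet
      (fun z _ => measurableSet_ball.inter hΩm)
  have hSΩ : S ⊆ Ω := by rw [hS]; exact fun x hx => hx.1
  have hSU : S ⊆ U := by
    intro x hx
    obtain ⟨z, hzQ, hz⟩ := Set.mem_iUnion₂.mp (hScov hx)
    rw [hU]
    exact Set.mem_iUnion₂.mpr ⟨z, hzQ, Metric.ball_subset_ball (by linarith) hz, hSΩ hx⟩
  have hUΩ : U ⊆ Ω := by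
    rw [hU]; exact Set.iUnion₂_subset fun z _ => Set.inter_subset_right
  have hd0 : ∀ x, 0 ≤ d x := fun x => (hd x) ▸ Metric.infDist_nonneg
  have hdρ : ∀ x ∈ S, d x ≤ ρ := by rw [hS]; exact fun x hx => hx.2.2
  -- measurability of kernels
  have hexp : (0:ℝ) ≤ (n:ℝ) + σ := by positivity
  have hnormm : Measurable fun p : EuclideanSpace ℝ (Fin n) × EuclideanSpace ℝ (Fin n) => ‖p.1 - p.2‖ ^ ((n:ℝ) + σ) :=
    ((Real.continuous_rpow_const hexp).comp
      ((continuous_fst.sub continuous_snd).norm)).measurable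
  have hF1 : Measurable fun p : EuclideanSpace ℝ (Fin n) × EuclideanSpace ℝ (Fin n) => F p.1 :=
    hFm.comp measurable_fst
  have hF2 : Measurable fun p : EuclideanSpace ℝ (Fin n) × EuclideanSpace ℝ (Fin n) => F p.2 :=
    hFm.comp measurable_snd
  have hgm : Measurable (Function.uncurry g) := by
    apply Measurable.ennreal_ofReal
    exact ((hF1.sub hF2).norm).div hnormm
  have hwm : Measurable (Function.uncurry w) := hnormm.ennreal_ofReal.inv
  have hnorm1 : ∀ x : EuclideanSpace ℝ (Fin n),
      Measurable fun y : EuclideanSpace ℝ (Fin n) => ‖x - y‖ ^ ((n:ℝ) + σ) := fun x =>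
    (Real.continuous_rpow_const hexp).measurable.comp (measurable_const.sub measurable_id).norm
  have hg1 : ∀ x, Measurable (g x) := fun x =>
    (((measurable_const.sub hFm).norm).div (hnorm1 x)).ennreal_ofReal
  have hw1 : ∀ x, Measurable (w x) := fun x => (hnorm1 x).ennreal_ofReal.inv
  have hFn : Measurable fun x : EuclideanSpace ℝ (Fin n) => ENNReal.ofReal ‖F x‖ := hFm.norm.ennreal_ofReal
  -- integrability
  have hFU : IntegrableOn F U := hF.mono_set hUΩ
  -- key real quantities
  set IU : ℝ := ∫ x in U, ‖F x‖ with hIUdef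
  set NU : ℝ := (ν U).toReal with hNUdef
  have hIU0 : 0 ≤ IU := integral_nonneg fun x => norm_nonneg _
  have hNU0 : 0 ≤ NU := ENNReal.toReal_nonneg
  set M : ℝ := IU + ρ * NU with hMdef
  have hM0 : 0 ≤ M := by positivity
  have hIUl : ∫⁻ x in U, ENNReal.ofReal ‖F x‖ = ENNReal.ofReal IU :=
    (ofReal_integral_eq_lintegral_ofReal hFU.norm
      (Filter.Eventually.of_forall fun x => norm_nonneg _)).symm
  -- Step A: replace weights by ρ^α ρ^β
  set c : ℝ≥0∞ := ENNReal.ofReal (ρ ^ α) * ENNReal.ofReal (ρ ^ β) with hcdef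
  have hcne : c ≠ ∞ := ENNReal.mul_ne_top ENNReal.ofReal_ne_top ENNReal.ofReal_ne_top
  have stepA : ∫⁻ x in S, ∫⁻ y in S,
      ENNReal.ofReal (d x ^ α * d y ^ β * (‖F x - F y‖ / ‖x - y‖ ^ ((n : ℝ) + σ)))
      ≤ c * ∫⁻ x in S, ∫⁻ y in S, g x y := by
    have hin : ∀ x ∈ S, ∫⁻ y in S,
        ENNReal.ofReal (d x ^ α * d y ^ β * (‖F x - F y‖ / ‖x - y‖ ^ ((n : ℝ) + σ)))
        ≤ c * ∫⁻ y in S, g x y := by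
      intro x hx
      have hpt : ∀ y ∈ S, ENNReal.ofReal (d x ^ α * d y ^ β * (‖F x - F y‖ / ‖x - y‖ ^ ((n : ℝ) + σ)))
          ≤ c * g x y := by
        intro y hy
        have hk0 : 0 ≤ ‖F x - F y‖ / ‖x - y‖ ^ ((n:ℝ) + σ) :=
          div_nonneg (norm_nonneg _) (Real.rpow_nonneg (norm_nonneg _) _)
        have h1 : d x ^ α ≤ ρ ^ α := Real.rpow_le_rpow (hd0 x) (hdρ x hx) hα
        have h2 : d y ^ β ≤ ρ ^ β := Real.rpow_le_rpow (hd0 y) (hdρ y hy) hβ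
        have hda : 0 ≤ d x ^ α := Real.rpow_nonneg (hd0 x) α
        have hdb : 0 ≤ d y ^ β := Real.rpow_nonneg (hd0 y) β
        have hra : 0 ≤ ρ ^ α := Real.rpow_nonneg hρ.le α
        have hmul : d x ^ α * d y ^ β * (‖F x - F y‖ / ‖x - y‖ ^ ((n:ℝ) + σ))
            ≤ ρ ^ α * ρ ^ β * (‖F x - F y‖ / ‖x - y‖ ^ ((n:ℝ) + σ)) := by
          apply mul_le_mul _ le_rfl hk0 (by positivity)
          exact mul_le_mul h1 h2 hdb hra
        calc ENNReal.ofReal (d x ^ α * d y ^ β * (‖F x - F y‖ / ‖x - y‖ ^ ((n:ℝ) + σ)))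
            ≤ ENNReal.ofReal (ρ ^ α * ρ ^ β * (‖F x - F y‖ / ‖x - y‖ ^ ((n:ℝ) + σ))) :=
              ENNReal.ofReal_le_ofReal hmul
        _ = c * g x y := by
              rw [ENNReal.ofReal_mul (by positivity), ENNReal.ofReal_mul hra]
      calc ∫⁻ y in S, ENNReal.ofReal (d x ^ α * d y ^ β * (‖F x - F y‖ / ‖x - y‖ ^ ((n : ℝ) + σ)))
          ≤ ∫⁻ y in S, c * g x y := setLIntegral_mono' hSm hpt
      _ = c * ∫⁻ y in S, g x y := lintegral_const_mul' c _ hcne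
    calc ∫⁻ x in S, ∫⁻ y in S,
        ENNReal.ofReal (d x ^ α * d y ^ β * (‖F x - F y‖ / ‖x - y‖ ^ ((n : ℝ) + σ)))
        ≤ ∫⁻ x in S, c * ∫⁻ y in S, g x y := setLIntegral_mono' hSm hin
    _ = c * ∫⁻ x in S, ∫⁻ y in S, g x y := lintegral_const_mul' c _ hcne
  -- Step B: split into near and far parts
  set N : EuclideanSpace ℝ (Fin n) → ℝ≥0∞ :=
    fun x => ∫⁻ y in S ∩ Metric.ball x ρ, g x y with hNdef
  set Fa : EuclideanSpace ℝ (Fin n) → ℝ≥0∞ :=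
    fun x => ∫⁻ y in S \ Metric.ball x ρ, g x y with hFadef
  have hNm : Measurable N := by
    have hNrepr : N = fun x => ∫⁻ y, (Metric.ball x ρ).indicator (g x) y ∂(volume.restrict S) := by
      funext x
      rw [lintegral_indicator measurableSet_ball, Measure.restrict_restrict measurableSet_ball,
        Set.inter_comm]
    rw [hNrepr]
    apply Measurable.lintegral_prod_right'
      (f := fun p : EuclideanSpace ℝ (Fin n) × EuclideanSpace ℝ (Fin n) =>
        (Metric.ball p.1 ρ).indicator (g p.1) p.2)
    have hset : MeasurableSet {p : EuclideanSpace ℝ (Fin n) × EuclideanSpace ℝ (Fin n) |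
        dist p.2 p.1 < ρ} :=
      measurableSet_lt (measurable_snd.dist measurable_fst) measurable_const
    have heq : (fun p : EuclideanSpace ℝ (Fin n) × EuclideanSpace ℝ (Fin n) =>
        (Metric.ball p.1 ρ).indicator (g p.1) p.2)
        = Set.indicator {p : EuclideanSpace ℝ (Fin n) × EuclideanSpace ℝ (Fin n) |
            dist p.2 p.1 < ρ} (Function.uncurry g) := by
      funext p
      by_cases h : p.2 ∈ Metric.ball p.1 ρ
      · rw [Set.indicator_of_mem h, Set.indicator_of_mem (by simpa [Metric.mem_ball] using h)]
        rfl
      · rw [Set.indicator_of_notMem h,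
          Set.indicator_of_notMem (by simpa [Metric.mem_ball] using h)]
    rw [heq]
    exact hgm.indicator hset
  have hsplit : ∫⁻ x in S, ∫⁻ y in S, g x y ≤ (∫⁻ x in S, N x) + ∫⁻ x in S, Fa x := by
    have h1 : ∀ x, ∫⁻ y in S, g x y ≤ N x + Fa x := by
      intro x
      calc ∫⁻ y in S, g x y
          = ∫⁻ y in (S ∩ Metric.ball x ρ) ∪ (S \ Metric.ball x ρ), g x y := by
            rw [Set.inter_union_diff]
      _ ≤ ∫⁻ y, g x y ∂(volume.restrict (S ∩ Metric.ball x ρ)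
            + volume.restrict (S \ Metric.ball x ρ)) :=
            lintegral_mono' (Measure.restrict_union_le _ _) le_rfl
      _ = N x + Fa x := lintegral_add_measure _ _ _
    calc ∫⁻ x in S, ∫⁻ y in S, g x y ≤ ∫⁻ x in S, (N x + Fa x) := lintegral_mono h1
    _ = (∫⁻ x in S, N x) + ∫⁻ x in S, Fa x := lintegral_add_left' hNm.aemeasurable _
  -- Step C: near part
  set az : EuclideanSpace ℝ (Fin n) → ℝ := fun z => ∫ x in Metric.ball z (8*ρ) ∩ Ω, ‖F x‖ with hazdef
  set bz : EuclideanSpace ℝ (Fin n) → ℝ := fun z => (ν (Metric.ball z (8*ρ) ∩ Ω)).toReal with hbzdef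
  have hcovS : S ⊆ ⋃ z ∈ Q, (S ∩ Metric.ball z ρ) := by
    intro x hx
    obtain ⟨z, hzQ, hz⟩ := Set.mem_iUnion₂.mp (hScov hx)
    exact Set.mem_iUnion₂.mpr ⟨z, hzQ, hx, hz⟩
  have hbiU : ∀ (T : Finset (EuclideanSpace ℝ (Fin n))),
      ∫⁻ x in ⋃ z ∈ T, (S ∩ Metric.ball z ρ), N x ≤ ∑ z ∈ T, ∫⁻ x in S ∩ Metric.ball z ρ, N x := by
    intro T
    induction T using Finset.induction with
    | empty => simp
    | @insert a T hnotmem ih =>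
      rw [Finset.set_biUnion_insert, Finset.sum_insert hnotmem]
      refine le_trans (lintegral_mono' (Measure.restrict_union_le _ _) le_rfl) ?_
      rw [lintegral_add_measure]
      exact add_le_add le_rfl ih
  have hNear1 : ∫⁻ x in S, N x ≤ ∑ z ∈ Q, ∫⁻ x in S ∩ Metric.ball z ρ, N x :=
    le_trans (lintegral_mono_set hcovS) (hbiU Q)
  have hNearz : ∀ z ∈ Q, ∫⁻ x in S ∩ Metric.ball z ρ, N x
      ≤ ENNReal.ofReal (|C₁| * ρ ^ (-σ) * (az z + 4*ρ*(bz z))) := by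
    intro z _
    have hsub2 : ∀ x ∈ S ∩ Metric.ball z ρ, S ∩ Metric.ball x ρ ⊆ Metric.ball z (2*ρ) ∩ Ω := by
      intro x hx y hy
      have h1 : dist y x < ρ := Metric.mem_ball.mp hy.2
      have h2 : dist x z < ρ := Metric.mem_ball.mp hx.2
      exact ⟨Metric.mem_ball.mpr (lt_of_le_of_lt (dist_triangle y x z) (by linarith)), hSΩ hy.1⟩
    have h1 : ∫⁻ x in S ∩ Metric.ball z ρ, N x
        ≤ ∫⁻ x in S ∩ Metric.ball z ρ, ∫⁻ y in Metric.ball z (2*ρ) ∩ Ω, g x y :=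
      setLIntegral_mono' (hSm.inter measurableSet_ball)
        (fun x hx => lintegral_mono_set (hsub2 x hx))
    have hsub3 : S ∩ Metric.ball z ρ ⊆ Metric.ball z (2*ρ) ∩ Ω :=
      fun x hx => ⟨Metric.ball_subset_ball (by linarith) hx.2, hSΩ hx.1⟩
    have h2 : ∫⁻ x in S ∩ Metric.ball z ρ, ∫⁻ y in Metric.ball z (2*ρ) ∩ Ω, g x y
        ≤ ∫⁻ x in Metric.ball z (2*ρ) ∩ Ω, ∫⁻ y in Metric.ball z (2*ρ) ∩ Ω, g x y :=
      lintegral_mono_set hsub3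
    have h3 := hcacc z (4*ρ) (by linarith)
    rw [show (4*ρ)/2 = 2*ρ by ring] at h3
    refine (h1.trans h2).trans (h3.trans (ENNReal.ofReal_le_ofReal ?_))
    have hFi8 : IntegrableOn (fun x => ‖F x‖) (Metric.ball z (8*ρ) ∩ Ω) :=
      (hF.mono_set Set.inter_subset_right).norm
    have hsub48 : Metric.ball z (4*ρ) ∩ Ω ⊆ Metric.ball z (8*ρ) ∩ Ω :=
      Set.inter_subset_inter_left _ (Metric.ball_subset_ball (by linarith))
    have haz : (∫ x in Metric.ball z (4*ρ) ∩ Ω, ‖F x‖) ≤ az z :=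
      setIntegral_mono_set hFi8
        (Filter.Eventually.of_forall fun x => norm_nonneg _)
        (HasSubset.Subset.eventuallyLE hsub48)
    have hbz : (ν (Metric.ball z (4*ρ) ∩ Ω)).toReal ≤ bz z :=
      ENNReal.toReal_mono (measure_ne_top ν _) (measure_mono hsub48)
    have haz0 : 0 ≤ ∫ x in Metric.ball z (4*ρ) ∩ Ω, ‖F x‖ :=
      integral_nonneg fun x => norm_nonneg _
    have hbz0 : (0:ℝ) ≤ (ν (Metric.ball z (4*ρ) ∩ Ω)).toReal := ENNReal.toReal_nonneg
    have hrσ : (4*ρ) ^ (-σ) ≤ ρ ^ (-σ) :=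
      Real.rpow_le_rpow_of_nonpos hρ (by linarith) (by linarith)
    have hρσ0 : (0:ℝ) ≤ ρ ^ (-σ) := Real.rpow_nonneg hρ.le _
    have h4σ0 : (0:ℝ) ≤ (4*ρ) ^ (-σ) := Real.rpow_nonneg (by linarith) _
    have hY : (∫ x in Metric.ball z (4*ρ) ∩ Ω, ‖F x‖) + 4*ρ*(ν (Metric.ball z (4*ρ) ∩ Ω)).toReal
        ≤ az z + 4*ρ*(bz z) := by
      have := mul_le_mul_of_nonneg_left hbz (by linarith : (0:ℝ) ≤ 4*ρ)
      linarith
    have hY0 : (0:ℝ) ≤ (∫ x in Metric.ball z (4*ρ) ∩ Ω, ‖F x‖)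
        + 4*ρ*(ν (Metric.ball z (4*ρ) ∩ Ω)).toReal := by positivity
    calc C₁ * (4*ρ) ^ (-σ) * ((∫ x in Metric.ball z (4*ρ) ∩ Ω, ‖F x‖)
          + 4*ρ*(ν (Metric.ball z (4*ρ) ∩ Ω)).toReal)
        ≤ |C₁| * (4*ρ) ^ (-σ) * ((∫ x in Metric.ball z (4*ρ) ∩ Ω, ‖F x‖)
          + 4*ρ*(ν (Metric.ball z (4*ρ) ∩ Ω)).toReal) := by
          apply mul_le_mul_of_nonneg_right _ hY0
          exact mul_le_mul_of_nonneg_right (le_abs_self C₁) h4σ0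
    _ ≤ |C₁| * ρ ^ (-σ) * (az z + 4*ρ*(bz z)) := by
          apply mul_le_mul _ hY hY0 (by positivity)
          exact mul_le_mul_of_nonneg_left hrσ (abs_nonneg C₁)
  -- overlap counting in ℝ≥0∞
  have hoverE : ∀ ξ : EuclideanSpace ℝ (Fin n),
      ∑ z ∈ Q, Set.indicator (Metric.ball z (8 * ρ)) (fun _ => (1 : ℝ≥0∞)) ξ ≤ (K:ℝ≥0∞) := by
    intro ξ
    have h := hover ξ
    have he : ∑ z ∈ Q, Set.indicator (Metric.ball z (8*ρ)) (fun _ => (1:ℝ≥0∞)) ξ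
        = ENNReal.ofReal (∑ z ∈ Q, Set.indicator (Metric.ball z (8*ρ)) (fun _ => (1:ℝ)) ξ) := by
      rw [ENNReal.ofReal_sum_of_nonneg
        (fun z _ => Set.indicator_nonneg (fun _ _ => zero_le_one) _)]
      refine Finset.sum_congr rfl (fun z _ => ?_)
      by_cases hmem : ξ ∈ Metric.ball z (8*ρ) <;> simp [hmem]
    rw [he]
    calc ENNReal.ofReal (∑ z ∈ Q, Set.indicator (Metric.ball z (8*ρ)) (fun _ => (1:ℝ)) ξ)
        ≤ ENNReal.ofReal (K:ℝ) := ENNReal.ofReal_le_ofReal h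
    _ = (K:ℝ≥0∞) := ENNReal.ofReal_natCast K
  -- overlap sums
  have hsumA : ∑ z ∈ Q, az z ≤ (K:ℝ) * IU := by
    have h1 := overlap_sum n volume Ω hΩm Q ρ K hoverE _ hFn
    rw [← hU] at h1
    have h2 : ∀ z ∈ Q, ∫⁻ x in Metric.ball z (8*ρ) ∩ Ω, ENNReal.ofReal ‖F x‖
        = ENNReal.ofReal (az z) := fun z _ =>
      (ofReal_integral_eq_lintegral_ofReal ((hF.mono_set Set.inter_subset_right).norm)
        (Filter.Eventually.of_forall fun x => norm_nonneg _)).symm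
    rw [Finset.sum_congr rfl h2, hIUl] at h1
    rw [← ENNReal.ofReal_sum_of_nonneg (fun z _ => integral_nonneg fun x => norm_nonneg _)] at h1
    have h3 : ENNReal.ofReal (∑ z ∈ Q, az z) ≤ ENNReal.ofReal ((K:ℝ) * IU) := by
      rw [ENNReal.ofReal_mul (by positivity), ENNReal.ofReal_natCast]
      exact h1
    exact (ENNReal.ofReal_le_ofReal_iff (by positivity)).mp h3
  have hsumB : ∑ z ∈ Q, bz z ≤ (K:ℝ) * NU := by
    have h1 := overlap_sum n ν Ω hΩm Q ρ K hoverE (fun _ => 1) measurable_const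
    rw [← hU] at h1
    simp only [setLIntegral_one] at h1
    calc ∑ z ∈ Q, bz z = (∑ z ∈ Q, ν (Metric.ball z (8*ρ) ∩ Ω)).toReal :=
          (ENNReal.toReal_sum (fun z _ => measure_ne_top ν _)).symm
    _ ≤ ((K:ℝ≥0∞) * ν U).toReal :=
          ENNReal.toReal_mono (ENNReal.mul_ne_top (ENNReal.natCast_ne_top K)
            (measure_ne_top ν U)) h1
    _ = (K:ℝ) * NU := by rw [ENNReal.toReal_mul, ENNReal.toReal_natCast]
  have hNearB : ∫⁻ x in S, N x ≤ ENNReal.ofReal ((4*(K:ℝ)*|C₁|) * (ρ ^ (-σ) * M)) := by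
    refine hNear1.trans ?_
    calc ∑ z ∈ Q, ∫⁻ x in S ∩ Metric.ball z ρ, N x
        ≤ ∑ z ∈ Q, ENNReal.ofReal (|C₁| * ρ ^ (-σ) * (az z + 4*ρ*(bz z))) :=
          Finset.sum_le_sum hNearz
    _ = ENNReal.ofReal (∑ z ∈ Q, |C₁| * ρ ^ (-σ) * (az z + 4*ρ*(bz z))) := by
          rw [ENNReal.ofReal_sum_of_nonneg]
          intro z hz
          have : 0 ≤ az z := integral_nonneg fun x => norm_nonneg _
          have : (0:ℝ) ≤ bz z := ENNReal.toReal_nonneg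
          positivity
    _ ≤ ENNReal.ofReal ((4*(K:ℝ)*|C₁|) * (ρ ^ (-σ) * M)) := by
          apply ENNReal.ofReal_le_ofReal
          rw [← Finset.mul_sum]
          have hρσ0 : (0:ℝ) ≤ ρ ^ (-σ) := Real.rpow_nonneg hρ.le _
          have hsum : ∑ z ∈ Q, (az z + 4*ρ*(bz z)) ≤ (K:ℝ) * IU + 4*ρ*((K:ℝ) * NU) := by
            rw [Finset.sum_add_distrib, ← Finset.mul_sum]
            have := mul_le_mul_of_nonneg_left hsumB (by linarith : (0:ℝ) ≤ 4*ρ)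
            linarith
          have hK0 : (0:ℝ) ≤ (K:ℝ) := Nat.cast_nonneg K
          have h4 : (K:ℝ) * IU + 4*ρ*((K:ℝ) * NU) ≤ 4*(K:ℝ)*M := by
            rw [hMdef]; nlinarith
          calc |C₁| * ρ ^ (-σ) * ∑ z ∈ Q, (az z + 4*ρ*(bz z))
              ≤ |C₁| * ρ ^ (-σ) * (4*(K:ℝ)*M) := by
                apply mul_le_mul_of_nonneg_left (hsum.trans h4) (by positivity)
          _ = (4*(K:ℝ)*|C₁|) * (ρ ^ (-σ) * M) := by ring
  -- Step E: far part
  set TB : ℝ≥0∞ := ENNReal.ofReal (ρ ^ (-σ)) * tailC n σ with hTBdef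
  have hTBne : TB ≠ ∞ := ENNReal.mul_ne_top ENNReal.ofReal_ne_top (tailC_lt_top n hσ0).ne
  have htail : ∀ x : EuclideanSpace ℝ (Fin n),
      ∫⁻ y in (Metric.ball x ρ)ᶜ, w x y ≤ TB := by
    intro x
    rw [hTBdef]
    exact tail_bound n hσ0 hρ x
  set G2 : EuclideanSpace ℝ (Fin n) → ℝ≥0∞ :=
    fun x => ∫⁻ y in S \ Metric.ball x ρ, ENNReal.ofReal ‖F y‖ * w x y with hG2def
  have hfar1 : ∀ x, Fa x ≤ ENNReal.ofReal ‖F x‖ * TB + G2 x := by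
    intro x
    have hpt : ∀ y ∈ S \ Metric.ball x ρ,
        g x y ≤ ENNReal.ofReal ‖F x‖ * w x y + ENNReal.ofReal ‖F y‖ * w x y := by
      intro y hy
      have hnb : ¬ dist y x < ρ := by simpa [Metric.mem_ball] using hy.2
      have hdist : ρ ≤ ‖x - y‖ := by
        rw [not_lt] at hnb
        calc ρ ≤ dist y x := hnb
        _ = ‖x - y‖ := by rw [dist_comm, dist_eq_norm]
      have hpow : 0 < ‖x - y‖ ^ ((n:ℝ)+σ) := Real.rpow_pos_of_pos (lt_of_lt_of_le hρ hdist) _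
      have hgw : g x y = ENNReal.ofReal ‖F x - F y‖ * w x y := by
        rw [hgdef, hwdef]
        simp only
        rw [ENNReal.ofReal_div_of_pos hpow, div_eq_mul_inv]
      rw [hgw, ← add_mul]
      apply mul_le_mul_left
      rw [← ENNReal.ofReal_add (norm_nonneg _) (norm_nonneg _)]
      exact ENNReal.ofReal_le_ofReal (norm_sub_le _ _)
    calc Fa x ≤ ∫⁻ y in S \ Metric.ball x ρ,
          (ENNReal.ofReal ‖F x‖ * w x y + ENNReal.ofReal ‖F y‖ * w x y) :=
        setLIntegral_mono' (hSm.diff measurableSet_ball) hpt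
    _ = (∫⁻ y in S \ Metric.ball x ρ, ENNReal.ofReal ‖F x‖ * w x y) + G2 x :=
        lintegral_add_left' (((hw1 x).const_mul _).aemeasurable) _
    _ ≤ ENNReal.ofReal ‖F x‖ * TB + G2 x := by
        apply add_le_add_left
        rw [lintegral_const_mul' _ _ ENNReal.ofReal_ne_top]
        apply mul_le_mul_right
        exact (lintegral_mono_set (fun y hy => hy.2)).trans (htail x)
  have hG2repr : ∀ x, G2 x = ∫⁻ y in S,
      ((Metric.ball x ρ)ᶜ).indicator (fun y' => ENNReal.ofReal ‖F y'‖ * w x y') y := by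
    intro x
    rw [hG2def]
    simp only
    rw [lintegral_indicator measurableSet_ball.compl,
      Measure.restrict_restrict measurableSet_ball.compl]
    congr 1
    rw [Set.diff_eq, Set.inter_comm]
  have hψm : Measurable (Function.uncurry fun x y =>
      ((Metric.ball x ρ)ᶜ).indicator (fun y' => ENNReal.ofReal ‖F y'‖ * w x y') y) := by
    have hset : MeasurableSet {p : EuclideanSpace ℝ (Fin n) × EuclideanSpace ℝ (Fin n) |
        ¬ dist p.2 p.1 < ρ} :=
      (measurableSet_lt (measurable_snd.dist measurable_fst) measurable_const).compl
    have hFn2 : Measurable fun p : EuclideanSpace ℝ (Fin n) × EuclideanSpace ℝ (Fin n) =>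
        ENNReal.ofReal ‖F p.2‖ := (hFm.comp measurable_snd).norm.ennreal_ofReal
    have heq : (Function.uncurry fun x y =>
        ((Metric.ball x ρ)ᶜ).indicator (fun y' => ENNReal.ofReal ‖F y'‖ * w x y') y)
        = Set.indicator {p : EuclideanSpace ℝ (Fin n) × EuclideanSpace ℝ (Fin n) |
            ¬ dist p.2 p.1 < ρ}
          (fun p => ENNReal.ofReal ‖F p.2‖ * Function.uncurry w p) := by
      funext p
      by_cases h : dist p.2 p.1 < ρ
      · simp [Function.uncurry, Set.indicator_apply, Metric.mem_ball, h, not_le.mpr h]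
      · simp [Function.uncurry, Set.indicator_apply, Metric.mem_ball, h, not_lt.mp h]
    rw [heq]
    exact (hFn2.mul hwm).indicator hset
  have hFar2 : ∫⁻ x in S, G2 x ≤ TB * ENNReal.ofReal IU := by
    have hswap : ∫⁻ x in S, G2 x = ∫⁻ y in S, ∫⁻ x in S,
        ((Metric.ball x ρ)ᶜ).indicator (fun y' => ENNReal.ofReal ‖F y'‖ * w x y') y := by
      rw [lintegral_congr hG2repr]
      exact lintegral_lintegral_swap hψm.aemeasurable
    rw [hswap]
    have hinner : ∀ y : EuclideanSpace ℝ (Fin n), ∫⁻ x in S,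
        ((Metric.ball x ρ)ᶜ).indicator (fun y' => ENNReal.ofReal ‖F y'‖ * w x y') y
        ≤ ENNReal.ofReal ‖F y‖ * TB := by
      intro y
      have heq2 : ∀ x : EuclideanSpace ℝ (Fin n),
          ((Metric.ball x ρ)ᶜ).indicator (fun y' => ENNReal.ofReal ‖F y'‖ * w x y') y
          = ((Metric.ball y ρ)ᶜ).indicator (fun x' => ENNReal.ofReal ‖F y‖ * w x' y) x := by
        intro x
        by_cases h : dist y x < ρ <;>
          simp [Set.indicator_apply, Metric.mem_ball, dist_comm, h]
      calc ∫⁻ x in S, ((Metric.ball x ρ)ᶜ).indicator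
            (fun y' => ENNReal.ofReal ‖F y'‖ * w x y') y
          = ∫⁻ x in S, ((Metric.ball y ρ)ᶜ).indicator
            (fun x' => ENNReal.ofReal ‖F y‖ * w x' y) x := lintegral_congr heq2
      _ = ∫⁻ x in (Metric.ball y ρ)ᶜ ∩ S, ENNReal.ofReal ‖F y‖ * w x y := by
          rw [lintegral_indicator measurableSet_ball.compl,
            Measure.restrict_restrict measurableSet_ball.compl]
      _ ≤ ∫⁻ x in (Metric.ball y ρ)ᶜ, ENNReal.ofReal ‖F y‖ * w x y :=
          lintegral_mono_set Set.inter_subset_left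
      _ = ENNReal.ofReal ‖F y‖ * ∫⁻ x in (Metric.ball y ρ)ᶜ, w x y :=
          lintegral_const_mul' _ _ ENNReal.ofReal_ne_top
      _ ≤ ENNReal.ofReal ‖F y‖ * TB := by
          apply mul_le_mul_right
          have hwsym : ∀ x : EuclideanSpace ℝ (Fin n),
              w x y = (ENNReal.ofReal (‖y - x‖ ^ ((n:ℝ)+σ)))⁻¹ := by
            intro x
            rw [hwdef]
            simp only
            rw [norm_sub_rev]
          calc ∫⁻ x in (Metric.ball y ρ)ᶜ, w x y
              = ∫⁻ x in (Metric.ball y ρ)ᶜ, (ENNReal.ofReal (‖y - x‖ ^ ((n:ℝ)+σ)))⁻¹ :=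
              lintegral_congr hwsym
          _ ≤ TB := by rw [hTBdef]; exact tail_bound n hσ0 hρ y
    calc ∫⁻ y in S, ∫⁻ x in S,
          ((Metric.ball x ρ)ᶜ).indicator (fun y' => ENNReal.ofReal ‖F y'‖ * w x y') y
        ≤ ∫⁻ y in S, ENNReal.ofReal ‖F y‖ * TB := lintegral_mono hinner
    _ = (∫⁻ y in S, ENNReal.ofReal ‖F y‖) * TB := lintegral_mul_const' _ _ hTBne
    _ ≤ (∫⁻ y in U, ENNReal.ofReal ‖F y‖) * TB :=
        mul_le_mul_left (lintegral_mono_set hSU) _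
    _ = TB * ENNReal.ofReal IU := by rw [hIUl, mul_comm]
  have hFarB : ∫⁻ x in S, Fa x ≤ 2 * TB * ENNReal.ofReal IU := by
    calc ∫⁻ x in S, Fa x ≤ ∫⁻ x in S, (ENNReal.ofReal ‖F x‖ * TB + G2 x) :=
        lintegral_mono hfar1
    _ = (∫⁻ x in S, ENNReal.ofReal ‖F x‖ * TB) + ∫⁻ x in S, G2 x :=
        lintegral_add_left' (hFn.mul_const _).aemeasurable _
    _ ≤ TB * ENNReal.ofReal IU + TB * ENNReal.ofReal IU := by
        apply add_le_add _ hFar2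
        rw [lintegral_mul_const' _ _ hTBne]
        calc (∫⁻ x in S, ENNReal.ofReal ‖F x‖) * TB
            ≤ (∫⁻ x in U, ENNReal.ofReal ‖F x‖) * TB :=
            mul_le_mul_left (lintegral_mono_set hSU) _
        _ = TB * ENNReal.ofReal IU := by rw [hIUl, mul_comm]
    _ = 2 * TB * ENNReal.ofReal IU := by ring
  -- final assembly
  set CtR : ℝ := (tailC n σ).toReal with hCtRdef
  have hCtR0 : 0 ≤ CtR := ENNReal.toReal_nonneg
  have hCt : tailC n σ = ENNReal.ofReal CtR := (ENNReal.ofReal_toReal (tailC_lt_top n hσ0).ne).symm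
  refine ⟨max (4*(K:ℝ)*|C₁| + 2*CtR) 1, lt_max_of_lt_right one_pos, ?_⟩
  set Cm : ℝ := max (4*(K:ℝ)*|C₁| + 2*CtR) 1 with hCmdef
  have hCm0 : 0 ≤ Cm := le_trans zero_le_one (le_max_right _ _)
  calc ∫⁻ x in S, ∫⁻ y in S,
      ENNReal.ofReal (d x ^ α * d y ^ β * (‖F x - F y‖ / ‖x - y‖ ^ ((n : ℝ) + σ)))
      ≤ c * ∫⁻ x in S, ∫⁻ y in S, g x y := stepA
  _ ≤ c * ((∫⁻ x in S, N x) + ∫⁻ x in S, Fa x) := mul_le_mul_right hsplit c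
  _ ≤ c * (ENNReal.ofReal ((4*(K:ℝ)*|C₁|) * (ρ ^ (-σ) * M)) + 2 * TB * ENNReal.ofReal IU) :=
      mul_le_mul_right (add_le_add hNearB hFarB) c
  _ ≤ c * (ENNReal.ofReal ((4*(K:ℝ)*|C₁|) * (ρ ^ (-σ) * M))
        + ENNReal.ofReal ((2*CtR) * (ρ ^ (-σ) * M))) := by
      apply mul_le_mul_right
      apply add_le_add_right
      rw [hTBdef, hCt]
      have hρσ0 : (0:ℝ) ≤ ρ ^ (-σ) := Real.rpow_nonneg hρ.le _
      calc 2 * (ENNReal.ofReal (ρ ^ (-σ)) * ENNReal.ofReal CtR) * ENNReal.ofReal IU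
          = ENNReal.ofReal (2 * (ρ ^ (-σ) * CtR) * IU) := by
            rw [ENNReal.ofReal_mul (by positivity), ENNReal.ofReal_mul (by positivity),
              ENNReal.ofReal_mul hρσ0, ENNReal.ofReal_ofNat]
      _ ≤ ENNReal.ofReal ((2*CtR) * (ρ ^ (-σ) * M)) := by
            apply ENNReal.ofReal_le_ofReal
            have hIUM : IU ≤ M := by rw [hMdef]; nlinarith
            have hh := mul_le_mul_of_nonneg_left hIUM (mul_nonneg hρσ0 hCtR0)
            nlinarith [hh]
  _ = c * ENNReal.ofReal ((4*(K:ℝ)*|C₁| + 2*CtR) * (ρ ^ (-σ) * M)) := by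
      rw [← ENNReal.ofReal_add (by positivity) (by positivity)]
      congr 1
      ring
  _ ≤ c * ENNReal.ofReal (Cm * (ρ ^ (-σ) * M)) := by
      apply mul_le_mul_right
      apply ENNReal.ofReal_le_ofReal
      apply mul_le_mul_of_nonneg_right (le_max_left _ _) (by positivity)
  _ = ENNReal.ofReal (Cm * ρ ^ (α + β - σ) * M) := by
      rw [hcdef, ← ENNReal.ofReal_mul (Real.rpow_nonneg hρ.le α),
        ← ENNReal.ofReal_mul (by positivity)]
      congr 1
      have hsplitexp : ρ ^ (α + β - σ) = ρ ^ α * (ρ ^ β * ρ ^ (-σ)) := by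
        rw [show α + β - σ = α + (β + -σ) by ring, Real.rpow_add hρ, Real.rpow_add hρ]
      rw [hsplitexp]
      ring

/-- one boundary layer estimate. Let `S = {x ∈ Ω : ρ/4 < d(x) ≤ ρ}`, let
`Q ⊆ S` be finite with `S ⊆ ⋃_{z∈Q} B_ρ(z)` and `∑_{z∈Q} 1_{B_{8ρ}(z)} ≤ K`, and set
`U = ⋃_{z∈Q} (B_{8ρ}(z) ∩ Ω)`. If `F ∈ L¹(Ω;ℝⁿ)`, `ν` is a finite nonnegative Borel
measure, and the local fractional Caccioppoli hypothesis with constant `C₁` holds for `F`,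
then there is `C = C(n,σ,K,C₁) > 0` with
`∫_S ∫_S d^α(x) d^β(y) |F(x) - F(y)| / |x-y|^{n+σ} dx dy ≤ C ρ^{α+β-σ} (∫_U |F| + ρ ν(U))`. -/
theorem statement13 (n : ℕ) (hn : 2 ≤ n)
    (Ω : Set (EuclideanSpace ℝ (Fin n))) (hΩo : IsOpen Ω) (hΩb : Bornology.IsBounded Ω)
    (σ : ℝ) (hσ : σ ∈ Set.Ioo (0:ℝ) 1) (α β : ℝ) (hα : 0 ≤ α) (hβ : 0 ≤ β)
    (ρ : ℝ) (hρ : 0 < ρ)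
    (d : EuclideanSpace ℝ (Fin n) → ℝ)
    (hd : ∀ x, d x = Metric.infDist x (frontier Ω))
    (S : Set (EuclideanSpace ℝ (Fin n)))
    (hS : S = {x ∈ Ω | ρ / 4 < d x ∧ d x ≤ ρ})
    (Q : Finset (EuclideanSpace ℝ (Fin n))) (hQS : ↑Q ⊆ S)
    (hScov : S ⊆ ⋃ z ∈ Q, Metric.ball z ρ)
    (K : ℕ)
    (hover : ∀ ξ : EuclideanSpace ℝ (Fin n),
      ∑ z ∈ Q, Set.indicator (Metric.ball z (8 * ρ)) (fun _ => (1 : ℝ)) ξ ≤ K)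
    (U : Set (EuclideanSpace ℝ (Fin n)))
    (hU : U = ⋃ z ∈ Q, (Metric.ball z (8 * ρ) ∩ Ω))
    (F : EuclideanSpace ℝ (Fin n) → EuclideanSpace ℝ (Fin n)) (hF : IntegrableOn F Ω)
    (ν : Measure (EuclideanSpace ℝ (Fin n))) [IsFiniteMeasure ν]
    (C₁ : ℝ)
    (hcacc : ∀ (z : EuclideanSpace ℝ (Fin n)) (R : ℝ), 0 < R →
      ∫⁻ x in Metric.ball z (R / 2) ∩ Ω, ∫⁻ y in Metric.ball z (R / 2) ∩ Ω,
          ENNReal.ofReal (‖F x - F y‖ / ‖x - y‖ ^ ((n : ℝ) + σ))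
        ≤ ENNReal.ofReal (C₁ * R ^ (-σ) *
            ((∫ x in Metric.ball z R ∩ Ω, ‖F x‖) + R * (ν (Metric.ball z R ∩ Ω)).toReal))) :
    ∃ C : ℝ, 0 < C ∧
      ∫⁻ x in S, ∫⁻ y in S,
          ENNReal.ofReal (d x ^ α * d y ^ β * (‖F x - F y‖ / ‖x - y‖ ^ ((n : ℝ) + σ)))
        ≤ ENNReal.ofReal (C * ρ ^ (α + β - σ) *
            ((∫ x in U, ‖F x‖) + ρ * (ν U).toReal)) := by
  have hae := hF.aestronglyMeasurable
  set G := hae.mk F with hGdef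
  have hGm : Measurable G := hae.stronglyMeasurable_mk.measurable
  have hFG : F =ᵐ[volume.restrict Ω] G := hae.ae_eq_mk
  have hΩm : MeasurableSet Ω := hΩo.measurableSet
  have haesub : ∀ A : Set (EuclideanSpace ℝ (Fin n)), A ⊆ Ω →
      ∀ᵐ x ∂(volume.restrict A), F x = G x := fun A hA =>
    ae_restrict_of_ae_restrict_of_subset hA hFG
  have hG : IntegrableOn G Ω := hF.congr hFG
  have hSΩ : S ⊆ Ω := by rw [hS]; exact fun x hx => hx.1
  have hUΩ : U ⊆ Ω := by rw [hU]; exact Set.iUnion₂_subset fun z _ => Set.inter_subset_right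
  have hcaccG : ∀ (z : EuclideanSpace ℝ (Fin n)) (R : ℝ), 0 < R →
      ∫⁻ x in Metric.ball z (R / 2) ∩ Ω, ∫⁻ y in Metric.ball z (R / 2) ∩ Ω,
          ENNReal.ofReal (‖G x - G y‖ / ‖x - y‖ ^ ((n : ℝ) + σ))
        ≤ ENNReal.ofReal (C₁ * R ^ (-σ) *
            ((∫ x in Metric.ball z R ∩ Ω, ‖G x‖) + R * (ν (Metric.ball z R ∩ Ω)).toReal)) := by
    intro z R hR
    have hB1 : Metric.ball z (R/2) ∩ Ω ⊆ Ω := Set.inter_subset_right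
    have hB2 : Metric.ball z R ∩ Ω ⊆ Ω := Set.inter_subset_right
    have hLHS : ∫⁻ x in Metric.ball z (R / 2) ∩ Ω, ∫⁻ y in Metric.ball z (R / 2) ∩ Ω,
        ENNReal.ofReal (‖G x - G y‖ / ‖x - y‖ ^ ((n : ℝ) + σ))
        = ∫⁻ x in Metric.ball z (R / 2) ∩ Ω, ∫⁻ y in Metric.ball z (R / 2) ∩ Ω,
        ENNReal.ofReal (‖F x - F y‖ / ‖x - y‖ ^ ((n : ℝ) + σ)) := by
      apply lintegral_congr_ae
      filter_upwards [haesub _ hB1] with x hx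
      apply lintegral_congr_ae
      filter_upwards [haesub _ hB1] with y hy
      rw [hx, hy]
    have hRHS : (∫ x in Metric.ball z R ∩ Ω, ‖G x‖) = ∫ x in Metric.ball z R ∩ Ω, ‖F x‖ := by
      apply integral_congr_ae
      filter_upwards [haesub _ hB2] with x hx
      rw [hx]
    rw [hLHS, hRHS]
    exact hcacc z R hR
  obtain ⟨C, hC0, hCle⟩ := statement13_aux n Ω hΩo σ hσ α β hα hβ ρ hρ d hd S hS Q hScov
    K hover U hU G hGm hG ν C₁ hcaccG
  refine ⟨C, hC0, ?_⟩
  have hLHS : ∫⁻ x in S, ∫⁻ y in S,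
      ENNReal.ofReal (d x ^ α * d y ^ β * (‖F x - F y‖ / ‖x - y‖ ^ ((n : ℝ) + σ)))
      = ∫⁻ x in S, ∫⁻ y in S,
      ENNReal.ofReal (d x ^ α * d y ^ β * (‖G x - G y‖ / ‖x - y‖ ^ ((n : ℝ) + σ))) := by
    apply lintegral_congr_ae
    filter_upwards [haesub S hSΩ] with x hx
    apply lintegral_congr_ae
    filter_upwards [haesub S hSΩ] with y hy
    rw [hx, hy]
  have hRHS : (∫ x in U, ‖F x‖) = ∫ x in U, ‖G x‖ := by
    apply integral_congr_ae
    filter_upwards [haesub U hUΩ] with x hx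
    rw [hx]
  rw [hLHS, hRHS]
  exact hCle
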